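/- Under a one-factor model Σ = σ²ββᵀ + Δ with β nondecreasing and Σ_j β_j/δ_j² > 0, the number k of active assets in the long-only minimum variance portfolio equals max{i ≤ p : R_i > 0}, where R₁ = 1/σ² and R_i = 1/σ² + Σ_{j=1}^{i-1}(β_j/δ_j²)(β_j − β_i), and the active set is {1,…,k}. -/

import Mathlib

open Matrix

set_option maxHeartbeats 1600000 in
theorem stmt12 {p : ℕ} (β δ : Fin p → ℝ) (σ : ℝ)
    (hβ : Monotone β) (hδ : ∀ i, 0 < δ i) (hσ : 0 < σ)
    (hsum : 0 < ∑ j, β j / (δ j) ^ 2)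
    (S : Matrix (Fin p) (Fin p) ℝ)
    (hSdef : S = σ ^ 2 • (Matrix.of fun i j => β i * β j)
      + Matrix.diagonal (fun i => (δ i) ^ 2))
    (w : Fin p → ℝ) (hwsum : ∑ i, w i = 1) (hnn : ∀ i, 0 ≤ w i)
    (hmin : ∀ v : Fin p → ℝ, (∑ i, v i = 1) → (∀ i, 0 ≤ v i) →
      w ⬝ᵥ S *ᵥ w ≤ v ⬝ᵥ S *ᵥ v) :
    let R : Fin p → ℝ := fun i =>
      1 / σ ^ 2 + ∑ j ∈ Finset.Iio i, (β j / (δ j) ^ 2) * (β j - β i)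
    let k : ℕ := (Finset.univ.filter (fun i => 0 < w i)).card
    (∀ i : Fin p, 0 < w i ↔ (i : ℕ) < k) ∧
    (∀ i : Fin p, 0 < R i ↔ (i : ℕ) < k) := by
  intro R k
  have hσ2 : (0:ℝ) < σ ^ 2 := by positivity
  have hσ2ne : (σ:ℝ) ^ 2 ≠ 0 := ne_of_gt hσ2
  have hmulnp : ∀ a b : ℝ, 0 ≤ a → b ≤ 0 → a * b ≤ 0 :=
    fun a b ha hb => mul_nonpos_iff.2 (Or.inl ⟨ha, hb⟩)
  have hmulnp2 : ∀ a b : ℝ, a ≤ 0 → 0 ≤ b → a * b ≤ 0 :=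
    fun a b ha hb => mul_nonpos_iff.2 (Or.inr ⟨ha, hb⟩)
  -- quadratic form
  set Q : (Fin p → ℝ) → ℝ :=
    fun v => σ ^ 2 * (∑ j, β j * v j) ^ 2 + ∑ j, (δ j) ^ 2 * (v j) ^ 2 with hQ
  have hquad : ∀ v, v ⬝ᵥ S *ᵥ v = Q v := by
    intro v
    subst hSdef
    have hrow : ∀ x, (((σ ^ 2 • (Matrix.of fun i j => β i * β j)
        + Matrix.diagonal (fun i => (δ i) ^ 2))) *ᵥ v) x
        = σ ^ 2 * β x * (∑ j, β j * v j) + (δ x) ^ 2 * v x := by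
      intro x
      simp only [mulVec, dotProduct, Matrix.add_apply, Matrix.smul_apply, Matrix.of_apply,
        smul_eq_mul, add_mul, Finset.sum_add_distrib, Finset.mul_sum,
        Matrix.diagonal_apply, ite_mul, zero_mul]
      rw [Finset.sum_ite_eq, if_pos (Finset.mem_univ x)]
      congr 1
      exact Finset.sum_congr rfl fun j _ => by ring
    simp only [dotProduct, hrow]
    simp only [mul_add, Finset.sum_add_distrib, hQ]
    congr 1
    · have : ∀ x ∈ Finset.univ, v x * (σ ^ 2 * β x * (∑ j, β j * v j))
          = (σ ^ 2 * (∑ j, β j * v j)) * (β x * v x) := fun x _ => by ring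
      rw [Finset.sum_congr rfl this, ← Finset.mul_sum, sq (∑ j, β j * v j)]
      ring
    · exact Finset.sum_congr rfl fun j _ => by ring
  have hmin' : ∀ v : Fin p → ℝ, (∑ i, v i = 1) → (∀ i, 0 ≤ v i) → Q w ≤ Q v := by
    intro v h1 h2
    rw [← hquad, ← hquad]
    exact hmin v h1 h2
  set s : ℝ := ∑ j, β j * w j with hs
  set g : Fin p → ℝ := fun i => σ ^ 2 * β i * s + (δ i) ^ 2 * w i with hg
  -- KKT conditions
  have hKKT : ∀ i j, 0 < w i → g i ≤ g j := by
    intro i j hwi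
    by_contra hgt
    push_neg at hgt
    have hij : i ≠ j := by rintro rfl; exact lt_irrefl _ hgt
    set c : ℝ := σ ^ 2 * (β j - β i) ^ 2 + (δ i) ^ 2 + (δ j) ^ 2 with hc
    have hcpos : 0 < c := by
      have h1 : (0:ℝ) < (δ i) ^ 2 := pow_pos (hδ i) 2
      have h2 : (0:ℝ) < (δ j) ^ 2 := pow_pos (hδ j) 2
      nlinarith [mul_nonneg hσ2.le (sq_nonneg (β j - β i))]
    set t : ℝ := min (w i) ((g i - g j) / c) with ht
    have htpos : 0 < t := lt_min hwi (div_pos (sub_pos.2 hgt) hcpos)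
    have htwi : t ≤ w i := min_le_left _ _
    have htc : t * c ≤ g i - g j := by
      have h1 : t ≤ (g i - g j) / c := min_le_right _ _
      have h2 : t * c ≤ ((g i - g j) / c) * c :=
        mul_le_mul_of_nonneg_right h1 hcpos.le
      rwa [div_mul_cancel₀ _ (ne_of_gt hcpos)] at h2
    set e : Fin p → ℝ :=
      fun m => (if m = j then (1:ℝ) else 0) - (if m = i then 1 else 0) with he
    set v : Fin p → ℝ := fun m => w m + t * e m with hv
    have hsum_ite : ∀ (f : Fin p → ℝ) (a : Fin p),
        ∑ m, f m * (if m = a then (1:ℝ) else 0) = f a := by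
      intro f a
      simp [mul_ite]
    have hsum_e : ∀ (f : Fin p → ℝ), ∑ m, f m * e m = f j - f i := by
      intro f
      simp only [he, mul_sub, Finset.sum_sub_distrib]
      rw [hsum_ite, hsum_ite]
    have hv1 : ∑ m, v m = 1 := by
      have h1 : ∑ m, (1:ℝ) * e m = 1 - 1 := hsum_e (fun _ => 1)
      simp only [one_mul] at h1
      simp only [hv, Finset.sum_add_distrib]
      have h2 : ∑ m, t * e m = t * ∑ m, e m := by rw [Finset.mul_sum]
      rw [h2, h1]
      simp [hwsum]
    have hvnn : ∀ m, 0 ≤ v m := by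
      intro m
      simp only [hv, he]
      by_cases hmi : m = i
      · rw [if_neg (fun h => hij (hmi.symm.trans h)), if_pos hmi, hmi]
        have := hnn i
        nlinarith
      · by_cases hmj : m = j
        · rw [if_pos hmj, if_neg hmi]
          have := hnn m
          nlinarith
        · rw [if_neg hmj, if_neg hmi]
          have := hnn m
          nlinarith
    have hbv : ∑ m, β m * v m = s + t * (β j - β i) := by
      simp only [hv, mul_add, Finset.sum_add_distrib]
      have h2 : ∑ m, β m * (t * e m) = t * ∑ m, β m * e m := by
        rw [Finset.mul_sum]; exact Finset.sum_congr rfl fun m _ => by ring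
      rw [h2, hsum_e β, hs]
    have hdwe : ∑ m, ((δ m) ^ 2 * w m) * e m = (δ j) ^ 2 * w j - (δ i) ^ 2 * w i :=
      hsum_e (fun m => (δ m) ^ 2 * w m)
    have hde2 : ∑ m, (δ m) ^ 2 * (e m) ^ 2 = (δ j) ^ 2 + (δ i) ^ 2 := by
      have hterm : ∀ m ∈ Finset.univ, (δ m) ^ 2 * (e m) ^ 2
          = (δ m) ^ 2 * (if m = j then (1:ℝ) else 0)
            + (δ m) ^ 2 * (if m = i then (1:ℝ) else 0) := by
        intro m _
        simp only [he]
        by_cases hmj : m = j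
        · by_cases hmi : m = i
          · exact (hij (hmi.symm.trans hmj)).elim
          · rw [if_pos hmj, if_neg hmi]
            ring
        · by_cases hmi : m = i
          · rw [if_neg hmj, if_pos hmi]
            ring
          · rw [if_neg hmj, if_neg hmi]
            ring
      rw [Finset.sum_congr rfl hterm, Finset.sum_add_distrib]
      have h1 := hsum_ite (fun m => (δ m) ^ 2) j
      have h2 := hsum_ite (fun m => (δ m) ^ 2) i
      simp only [mul_ite, mul_one, mul_zero] at h1 h2 ⊢
      rw [h1, h2]
    have hdv : ∑ m, (δ m) ^ 2 * (v m) ^ 2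
        = ∑ m, (δ m) ^ 2 * (w m) ^ 2
          + 2 * t * ((δ j) ^ 2 * w j - (δ i) ^ 2 * w i)
          + t ^ 2 * ((δ j) ^ 2 + (δ i) ^ 2) := by
      have hterm : ∀ m ∈ Finset.univ, (δ m) ^ 2 * (v m) ^ 2
          = (δ m) ^ 2 * (w m) ^ 2 + 2 * t * (((δ m) ^ 2 * w m) * e m)
            + t ^ 2 * ((δ m) ^ 2 * (e m) ^ 2) := by
        intro m _
        simp only [hv]
        ring
      rw [Finset.sum_congr rfl hterm, Finset.sum_add_distrib, Finset.sum_add_distrib,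
        ← Finset.mul_sum, ← Finset.mul_sum, hdwe, hde2]
    have hQv : Q v = Q w + 2 * t * (g j - g i) + t ^ 2 * c := by
      simp only [hQ]
      rw [hbv, hdv]
      simp only [hg, hc]
      ring
    have hle := hmin' v hv1 hvnn
    rw [hQv] at hle
    nlinarith [mul_pos htpos (sub_pos.2 hgt), mul_le_mul_of_nonneg_left htc htpos.le]
  -- existence of a positive weight
  have hex : ∃ i0, 0 < w i0 := by
    by_contra h
    push_neg at h
    have : ∑ i, w i = 0 := Finset.sum_eq_zero fun i _ => le_antisymm (h i) (hnn i)
    rw [hwsum] at this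
    exact one_ne_zero this
  obtain ⟨i0, hi0⟩ := hex
  set lam : ℝ := g i0 with hlam
  have hlam_le : ∀ j, lam ≤ g j := fun j => hKKT i0 j hi0
  have hlam_eq : ∀ i, 0 < w i → g i = lam := fun i h => le_antisymm (hKKT i i0 h) (hlam_le i)
  have hlam_pos : 0 < lam := by
    have h1 : ∑ i, w i * g i = lam := by
      have hc : ∀ i ∈ Finset.univ, w i * g i = w i * lam := by
        intro i _
        rcases eq_or_lt_of_le (hnn i) with h | h
        · rw [← h]; ring
        · rw [hlam_eq i h]
      rw [Finset.sum_congr rfl hc, ← Finset.sum_mul, hwsum, one_mul]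
    have h2 : ∑ i, w i * g i = σ ^ 2 * s ^ 2 + ∑ i, (δ i) ^ 2 * (w i) ^ 2 := by
      simp only [hg, mul_add, Finset.sum_add_distrib]
      congr 1
      · have hc : ∀ i ∈ Finset.univ, w i * (σ ^ 2 * β i * s)
            = (σ ^ 2 * s) * (β i * w i) := fun i _ => by ring
        rw [Finset.sum_congr rfl hc, ← Finset.mul_sum, hs]
        ring
      · exact Finset.sum_congr rfl fun i _ => by ring
    have h3 : 0 < ∑ i, (δ i) ^ 2 * (w i) ^ 2 := by
      apply Finset.sum_pos' (fun i _ => by positivity)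
      exact ⟨i0, Finset.mem_univ i0, mul_pos (pow_pos (hδ i0) 2) (pow_pos hi0 2)⟩
    nlinarith
  -- the support
  set T : Finset (Fin p) := Finset.univ.filter (fun i => 0 < w i) with hT
  have hmemT : ∀ i, i ∈ T ↔ 0 < w i := by
    intro i; simp [hT]
  have hw0 : ∀ i, i ∉ T → w i = 0 := by
    intro i hi
    rw [hmemT] at hi
    push_neg at hi
    exact le_antisymm hi (hnn i)
  have hd : ∀ x ∈ T, (δ x) ^ 2 * w x = lam - σ ^ 2 * β x * s := by
    intro x hx
    have := hlam_eq x ((hmemT x).1 hx)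
    simp only [hg] at this
    linarith
  have hsT : ∑ i ∈ T, β i * w i = s := by
    rw [hs]
    apply Finset.sum_subset (Finset.subset_univ T)
    intro x _ hx
    rw [hw0 x hx, mul_zero]
  set B : ℝ := ∑ i ∈ T, β i / (δ i) ^ 2 with hB
  set C : ℝ := ∑ i ∈ T, (β i) ^ 2 / (δ i) ^ 2 with hC
  have hCnn : 0 ≤ C := Finset.sum_nonneg fun i _ => by positivity
  have hkey : s * (1 + σ ^ 2 * C) = lam * B := by
    have hterm : ∀ x ∈ T, lam * (β x / (δ x) ^ 2) - σ ^ 2 * s * ((β x) ^ 2 / (δ x) ^ 2)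
        = β x * w x := by
      intro x hx
      have hdx := hd x hx
      have hδx : (δ x) ^ 2 ≠ 0 := pow_ne_zero 2 (ne_of_gt (hδ x))
      have e1 : lam * (β x / (δ x) ^ 2) - σ ^ 2 * s * ((β x) ^ 2 / (δ x) ^ 2)
          = (β x * (lam - σ ^ 2 * β x * s)) / (δ x) ^ 2 := by ring
      rw [e1, ← hdx, mul_comm ((δ x) ^ 2) (w x), ← mul_assoc, mul_div_assoc,
        div_self hδx, mul_one]
    have h1 : lam * B - σ ^ 2 * s * C = ∑ i ∈ T, β i * w i := by
      rw [hB, hC, Finset.mul_sum, Finset.mul_sum, ← Finset.sum_sub_distrib]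
      exact Finset.sum_congr rfl hterm
    rw [hsT] at h1
    linear_combination -h1
  have hspos : 0 < s := by
    rcases lt_trichotomy 0 s with h | h | h
    · exact h
    · -- s = 0
      exfalso
      have hTuniv : T = Finset.univ := by
        apply Finset.eq_univ_iff_forall.2
        intro x
        by_contra hx
        have hwx := hw0 x hx
        have := hlam_le x
        simp only [hg] at this
        rw [hwx, ← h] at this
        simp at this
        nlinarith
      have hBpos : 0 < B := by
        rw [hB, hTuniv]
        exact hsum
      rw [← h, zero_mul] at hkey
      nlinarith [mul_pos hlam_pos hBpos]
    · -- s < 0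
      exfalso
      have hBneg : B < 0 := by
        have h1 : lam * B < 0 := by
          rw [← hkey]
          nlinarith [mul_nonneg hσ2.le hCnn,
            hmulnp2 _ _ h.le (mul_nonneg hσ2.le hCnn)]
        by_contra hb
        push_neg at hb
        nlinarith [mul_nonneg hlam_pos.le hb]
      have hsplit : ∑ i ∈ Finset.univ \ T, β i / (δ i) ^ 2 + ∑ i ∈ T, β i / (δ i) ^ 2
          = ∑ i, β i / (δ i) ^ 2 := Finset.sum_sdiff (Finset.subset_univ T)
      have h2 : ∑ i ∈ Finset.univ \ T, β i / (δ i) ^ 2 ≤ 0 := by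
        apply Finset.sum_nonpos
        intro x hx
        rw [Finset.mem_sdiff] at hx
        have hwx : w x = 0 := hw0 x hx.2
        have hgx := hlam_le x
        simp only [hg, hwx, mul_zero, add_zero] at hgx
        have hβx : β x < 0 := by
          by_contra hbx
          push_neg at hbx
          nlinarith [hmulnp _ _ (mul_nonneg hσ2.le hbx) h.le]
        have hδx : (0:ℝ) < (δ x) ^ 2 := pow_pos (hδ x) 2
        exact div_nonpos_iff.2 (Or.inr ⟨hβx.le, hδx.le⟩)
      rw [← hB] at hsplit
      linarith
  have hBpos : 0 < B := by
    have h1 : 0 < s * (1 + σ ^ 2 * C) :=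
      mul_pos hspos (by nlinarith [mul_nonneg hσ2.le hCnn])
    rw [hkey] at h1
    by_contra hb
    push_neg at hb
    nlinarith [hmulnp _ _ hlam_pos.le hb]
  -- downward closedness
  have hdown : ∀ i j : Fin p, 0 < w i → j ≤ i → 0 < w j := by
    intro i j hwi hji
    by_contra hwj
    push_neg at hwj
    have hwj0 : w j = 0 := le_antisymm hwj (hnn j)
    have h1 := hlam_le j
    have h2 := hlam_eq i hwi
    simp only [hg, hwj0, mul_zero, add_zero] at h1 h2
    have hβ' : β j ≤ β i := hβ hji
    have hwi' : 0 < (δ i) ^ 2 * w i := mul_pos (pow_pos (hδ i) 2) hwi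
    nlinarith [mul_le_mul_of_nonneg_left hβ' (mul_pos hσ2 hspos).le]
  -- initial segment
  have hk : k = T.card := rfl
  have hseg : ∀ i : Fin p, i ∈ T ↔ (i : ℕ) < k := by
    intro i
    constructor
    · intro hi
      have hsub : Finset.Iic i ⊆ T := by
        intro j hj
        rw [Finset.mem_Iic] at hj
        exact (hmemT j).2 (hdown i j ((hmemT i).1 hi) hj)
      have := Finset.card_le_card hsub
      rw [Fin.card_Iic] at this
      omega
    · intro hi
      by_contra hx
      have hsub : T ⊆ Finset.Iio i := by
        intro j hj
        rw [Finset.mem_Iio]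
        by_contra hji
        push_neg at hji
        exact hx ((hmemT i).2 (hdown j i ((hmemT j).1 hj) hji))
      have := Finset.card_le_card hsub
      rw [Fin.card_Iio] at this
      omega
  refine ⟨fun i => by rw [← hmemT]; exact hseg i, ?_⟩
  -- part 2
  intro i
  have hRi : R i = 1 / σ ^ 2 + ∑ j ∈ Finset.Iio i, (β j / (δ j) ^ 2) * (β j - β i) := rfl
  set d : Fin p → ℝ := fun j => lam - σ ^ 2 * β j * s with hdd
  have hE1 : σ ^ 2 * s * R i
      = s + ∑ j ∈ Finset.Iio i, (β j / (δ j) ^ 2) * (d i - d j) := by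
    have h2 : σ ^ 2 * s * (1 / σ ^ 2) = s := by
      rw [mul_comm (σ ^ 2) s, mul_assoc, mul_one_div, div_self hσ2ne, mul_one]
    rw [hRi, mul_add, h2, Finset.mul_sum]
    congr 1
    refine Finset.sum_congr rfl fun j _ => ?_
    simp only [hdd]
    ring
  have hdT : ∀ j ∈ T, d j = (δ j) ^ 2 * w j := by
    intro j hj
    simp only [hdd]
    linarith [hd j hj]
  have hdpos : ∀ j ∈ T, 0 < d j := by
    intro j hj
    have hwj := (hmemT j).1 hj
    rw [hdT j hj]
    exact mul_pos (pow_pos (hδ j) 2) hwj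
  have hdnp : ∀ j, j ∉ T → d j ≤ 0 := by
    intro j hj
    have hwj := hw0 j hj
    have := hlam_le j
    simp only [hg, hwj, mul_zero, add_zero] at this
    simp only [hdd]
    linarith
  have hterm2 : ∀ j ∈ T, (β j / (δ j) ^ 2) * (d i - d j)
      = (β j / (δ j) ^ 2) * d i - β j * w j := by
    intro j hj
    have hδj : (δ j) ^ 2 ≠ 0 := pow_ne_zero 2 (ne_of_gt (hδ j))
    rw [mul_sub, hdT j hj]
    congr 1
    rw [div_mul_eq_mul_div, div_eq_iff hδj]
    ring
  constructor
  · -- 0 < R i → i < k : contrapositive; prove i ≥ k → R i ≤ 0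
    intro hRpos
    by_contra hik
    have hiT : i ∉ T := fun h => hik ((hseg i).1 h)
    have hTsub : T ⊆ Finset.Iio i := by
      intro j hj
      rw [Finset.mem_Iio]
      by_contra hji
      push_neg at hji
      exact hiT ((hmemT i).2 (hdown j i ((hmemT j).1 hj) hji))
    have hsplit : ∑ j ∈ Finset.Iio i, (β j / (δ j) ^ 2) * (d i - d j)
        = ∑ j ∈ T, (β j / (δ j) ^ 2) * (d i - d j)
          + ∑ j ∈ Finset.Iio i \ T, (β j / (δ j) ^ 2) * (d i - d j) := by
      rw [add_comm, Finset.sum_sdiff hTsub]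
    have hTpart : ∑ j ∈ T, (β j / (δ j) ^ 2) * (d i - d j) = B * d i - s := by
      rw [Finset.sum_congr rfl hterm2, Finset.sum_sub_distrib, hsT, ← Finset.sum_mul]
    have hrest : ∑ j ∈ Finset.Iio i \ T, (β j / (δ j) ^ 2) * (d i - d j) ≤ 0 := by
      apply Finset.sum_nonpos
      intro j hj
      rw [Finset.mem_sdiff, Finset.mem_Iio] at hj
      have hdj := hdnp j hj.2
      have hβj : 0 < β j := by
        simp only [hdd] at hdj
        by_contra hb
        push_neg at hb
        nlinarith [hmulnp2 _ _ (hmulnp _ _ hσ2.le hb) hspos.le]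
      have hβji : β j ≤ β i := hβ hj.1.le
      have hdiff : d i - d j ≤ 0 := by
        simp only [hdd]
        nlinarith [mul_le_mul_of_nonneg_left hβji (mul_pos hσ2 hspos).le]
      have hpos' : (0:ℝ) < β j / (δ j) ^ 2 := div_pos hβj (pow_pos (hδ j) 2)
      exact hmulnp _ _ hpos'.le hdiff
    have hdi : d i ≤ 0 := hdnp i hiT
    have hfinal : σ ^ 2 * s * R i ≤ 0 := by
      rw [hE1, hsplit, hTpart]
      have h9 : B * d i ≤ 0 := hmulnp _ _ hBpos.le hdi
      revert hrest
      generalize (∑ j ∈ Finset.Iio i \ T, β j / (δ j) ^ 2 * (d i - d j)) = r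
      intro hrest
      linarith [h9, hrest]
    nlinarith [mul_pos (mul_pos hσ2 hspos) hRpos]
  · -- i < k → 0 < R i
    intro hik
    have hiT : i ∈ T := (hseg i).2 hik
    have hsub : Finset.Iio i ⊆ T := by
      intro j hj
      rw [Finset.mem_Iio] at hj
      exact (hmemT j).2 (hdown i j ((hmemT i).1 hiT) hj.le)
    have hE2 : ∑ j ∈ Finset.Iio i, (β j / (δ j) ^ 2) * (d i - d j)
        = (∑ j ∈ Finset.Iio i, β j / (δ j) ^ 2) * d i
          - ∑ j ∈ Finset.Iio i, β j * w j := by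
      have h5 : ∀ j ∈ Finset.Iio i, (β j / (δ j) ^ 2) * (d i - d j)
          = (β j / (δ j) ^ 2) * d i - β j * w j := fun j hj => hterm2 j (hsub hj)
      rw [Finset.sum_congr rfl h5, Finset.sum_sub_distrib, ← Finset.sum_mul]
    have hE3 : ∑ j ∈ Finset.Iio i, β j * w j + ∑ j ∈ T \ Finset.Iio i, β j * w j = s := by
      rw [add_comm, Finset.sum_sdiff hsub, hsT]
    set e' : ℝ := lam - σ ^ 2 * s * max (β i) 0 with he'
    have hdi : 0 < d i := hdpos i hiT
    have he'pos : 0 < e' := by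
      rcases le_or_gt (β i) 0 with h | h
      · rw [he', max_eq_right h]
        simpa using hlam_pos
      · rw [he', max_eq_left h.le]
        simp only [hdd] at hdi
        nlinarith
    -- per-term bound on Iio i
    have hb1 : ∀ j ∈ Finset.Iio i, e' * (β j * w j) ≤ lam * ((β j / (δ j) ^ 2) * d i) := by
      intro j hj
      have hjT := hsub hj
      have hdj := hd j hjT
      have hdjpos := hdpos j hjT
      have hδj : (0:ℝ) < (δ j) ^ 2 := pow_pos (hδ j) 2
      have hβji : β j ≤ β i := hβ (Finset.mem_Iio.1 hj).le
      -- reduce to polynomial inequality: lam * β j * d i ≥ e' * β j * d j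
      have hkey2 : e' * (β j * d j) ≤ lam * (β j * d i) := by
        rcases le_or_gt (β i) 0 with hbi | hbi
        · have hbj : β j ≤ 0 := le_trans hβji hbi
          rw [he', max_eq_right hbi]
          simp only [hdd] at *
          nlinarith [mul_nonneg (mul_nonneg hlam_pos.le (mul_pos hσ2 hspos).le)
            (mul_nonneg (neg_nonneg.2 hbj) (sub_nonneg.2 hβji))]
        · rw [he', max_eq_left hbi.le]
          have hq : 0 ≤ σ ^ 2 * s * (β j * β j) * (lam - σ ^ 2 * β i * s) := by
            have h8 : (0:ℝ) ≤ σ ^ 2 * s * (β j * β j) :=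
              mul_nonneg (mul_pos hσ2 hspos).le (mul_self_nonneg (β j))
            have h9 : (0:ℝ) ≤ lam - σ ^ 2 * β i * s := by
              have := hdpos i hiT
              simp only [hdd] at this
              linarith
            exact mul_nonneg h8 h9
          simp only [hdd] at *
          nlinarith [hq]
      have hwj : w j = d j / (δ j) ^ 2 := by
        rw [hdT j hjT, mul_comm ((δ j) ^ 2) (w j), mul_div_assoc, div_self hδj.ne',
          mul_one]
      rw [hwj]
      calc e' * (β j * (d j / (δ j) ^ 2)) = (e' * (β j * d j)) / (δ j) ^ 2 := by ring
        _ ≤ (lam * (β j * d i)) / (δ j) ^ 2 := (div_le_div_iff_of_pos_right hδj).2 hkey2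
        _ = lam * ((β j / (δ j) ^ 2) * d i) := by ring
    have hb2 : ∀ j ∈ T \ Finset.Iio i, e' * (β j * w j) ≤ lam * (β j * w j) := by
      intro j hj
      rw [Finset.mem_sdiff, Finset.mem_Iio] at hj
      have hij : i ≤ j := not_lt.1 hj.2
      have hwj := (hmemT j).1 hj.1
      have hβij : β i ≤ β j := hβ hij
      have hle : lam - e' = σ ^ 2 * s * max (β i) 0 := by rw [he']; ring
      rcases le_or_gt (β i) 0 with hbi | hbi
      · rw [max_eq_right hbi, mul_zero] at hle
        have heq : lam = e' := by linarith
        rw [heq]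
      · rw [max_eq_left hbi.le] at hle
        have hβjpos : 0 < β j := lt_of_lt_of_le hbi hβij
        have h6 : 0 ≤ (lam - e') * (β j * w j) := by
          rw [hle]
          exact mul_nonneg (mul_nonneg (mul_nonneg hσ2.le hspos.le) hbi.le)
            (mul_nonneg hβjpos.le (hnn j))
        nlinarith [h6]
    have hsum1 : ∑ j ∈ Finset.Iio i, e' * (β j * w j)
        ≤ ∑ j ∈ Finset.Iio i, lam * ((β j / (δ j) ^ 2) * d i) :=
      Finset.sum_le_sum hb1
    have hsum2 : ∑ j ∈ T \ Finset.Iio i, e' * (β j * w j)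
        ≤ ∑ j ∈ T \ Finset.Iio i, lam * (β j * w j) :=
      Finset.sum_le_sum hb2
    have hlamX : e' * s ≤ lam * (σ ^ 2 * s * R i) := by
      rw [hE1, hE2]
      have hL : lam * (s + ((∑ j ∈ Finset.Iio i, β j / (δ j) ^ 2) * d i
          - ∑ j ∈ Finset.Iio i, β j * w j))
          = ∑ j ∈ Finset.Iio i, lam * ((β j / (δ j) ^ 2) * d i)
            + ∑ j ∈ T \ Finset.Iio i, lam * (β j * w j) := by
        rw [← Finset.mul_sum, ← Finset.mul_sum]
        have h4 : ∑ j ∈ T \ Finset.Iio i, β j * w j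
            = s - ∑ j ∈ Finset.Iio i, β j * w j := by linarith [hE3]
        rw [h4, ← Finset.sum_mul]
        ring
      rw [hL]
      have hR : e' * s = ∑ j ∈ Finset.Iio i, e' * (β j * w j)
          + ∑ j ∈ T \ Finset.Iio i, e' * (β j * w j) := by
        rw [← Finset.mul_sum, ← Finset.mul_sum, ← mul_add, hE3]
      rw [hR]
      exact add_le_add hsum1 hsum2
    have hpos : 0 < e' * s := mul_pos he'pos hspos
    have hfin : 0 < lam * (σ ^ 2 * s * R i) := lt_of_lt_of_le hpos hlamX
    by_contra hcon
    push_neg at hcon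
    have h7 : σ ^ 2 * s * R i ≤ 0 := hmulnp _ _ (mul_pos hσ2 hspos).le hcon
    nlinarith [hmulnp _ _ hlam_pos.le h7]
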